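/- Let G be a group, 𝓕 the forest monoid, and suppose maps G × 𝓕 → 𝓕, (g,E) ↦ g·E, and G × 𝓕 → G, (g,E) ↦ g^E, form a Zappa–Szép action pair (satisfying the eight axioms below). Then the action of G on 𝓕 preserves the set of generators: for every g ∈ G and every k ≥ 1 there exists ℓ ≥ 1 with g·λ_k = λ_ℓ. -/

import Mathlib

/-- The defining relation of the forest monoid: `λ_j * λ_i = λ_i * λ_{j+1}` for `i < j`. -/
def ForestRel : FreeMonoid ℕ+ → FreeMonoid ℕ+ → Prop := fun a b =>
  ∃ i j : ℕ+, i < j ∧ a = FreeMonoid.of j * FreeMonoid.of i ∧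
    b = FreeMonoid.of i * FreeMonoid.of (j + 1)

/-- The congruence generated by the forest relations. -/
def ForestCon : Con (FreeMonoid ℕ+) := conGen ForestRel

/-- The forest monoid `𝓕`. -/
abbrev ForestMonoid := ForestCon.Quotient

/-- The generator `λ_k` of the forest monoid. -/
def lam (k : ℕ+) : ForestMonoid := ForestCon.mk' (FreeMonoid.of k)

/-- The length homomorphism on the forest monoid. -/
def Lhom : ForestMonoid →* Multiplicative ℕ :=
  ForestCon.lift (FreeMonoid.lift fun _ => Multiplicative.ofAdd 1) (by
    apply Con.conGen_le.mpr
    rintro a b ⟨i, j, _, rfl, rfl⟩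
    show (FreeMonoid.lift fun _ => Multiplicative.ofAdd 1) _ =
      (FreeMonoid.lift fun _ => Multiplicative.ofAdd 1) _
    simp)

lemma Lhom_mk (w : FreeMonoid ℕ+) :
    Lhom (ForestCon.mk' w) = Multiplicative.ofAdd (FreeMonoid.toList w).length := by
  show (FreeMonoid.lift fun _ => Multiplicative.ofAdd 1) w = _
  rw [FreeMonoid.lift_apply]
  induction FreeMonoid.toList w with
  | nil => rfl
  | cons a t ih =>
      simp only [List.map_cons, List.prod_cons, ih, List.length_cons]
      rw [← ofAdd_add]
      congr 1
      omega

lemma Lhom_lam (k : ℕ+) : Lhom (lam k) = Multiplicative.ofAdd 1 :=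
  Lhom_mk (FreeMonoid.of k)

lemma eq_one_of_Lhom {E : ForestMonoid} (h : Lhom E = 1) : E = 1 := by
  obtain ⟨w, rfl⟩ := Con.mk'_surjective E
  rw [Lhom_mk w] at h
  have : (FreeMonoid.toList w).length = 0 := by
    simpa using congrArg Multiplicative.toAdd h
  have : w = 1 := by
    cases w using FreeMonoid.casesOn
    · rfl
    · simp at this
  simp [this]

lemma lam_ne_mul {k : ℕ+} {A B : ForestMonoid} (hA : A ≠ 1) (hB : B ≠ 1) :
    lam k ≠ A * B := by
  intro h
  have hL := congrArg Lhom h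
  rw [Lhom_lam, map_mul] at hL
  have h1 : Multiplicative.toAdd (Lhom A) ≠ 0 := fun h0 => hA (eq_one_of_Lhom (by
    have : Lhom A = Multiplicative.ofAdd 0 := by
      rw [← h0]; rfl
    simpa using this))
  have h2 : Multiplicative.toAdd (Lhom B) ≠ 0 := fun h0 => hB (eq_one_of_Lhom (by
    have : Lhom B = Multiplicative.ofAdd 0 := by
      rw [← h0]; rfl
    simpa using this))
  have := congrArg Multiplicative.toAdd hL
  simp only [toAdd_mul, toAdd_ofAdd] at this
  omega

/-- given a Zappa–Szép action pair of a group `G` and the forest monoid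
`𝓕` (with `act g E = g·E` and `pw g E = g^E`), the action of `G` on `𝓕` preserves the
set of generators `λ_k`. -/
theorem zappaSzep_action_preserves_generators {G : Type*} [Group G]
    (act : G → ForestMonoid → ForestMonoid) (pw : G → ForestMonoid → G)
    (h1 : ∀ E, act 1 E = E)
    (h2 : ∀ g h : G, ∀ E, act (g * h) E = act g (act h E))
    (h3 : ∀ g : G, pw g 1 = g)
    (h4 : ∀ g : G, ∀ E F, pw g (E * F) = pw (pw g E) F)
    (h5 : ∀ E, pw (1 : G) E = 1)
    (h6 : ∀ g h : G, ∀ E, pw (g * h) E = pw g (act h E) * pw h E)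
    (h7 : ∀ g : G, act g 1 = 1)
    (h8 : ∀ g : G, ∀ E F, act g (E * F) = act g E * act (pw g E) F) :
    ∀ (g : G) (k : ℕ+), ∃ l : ℕ+, act g (lam k) = lam l := by
  have cancel : ∀ (g : G) (E : ForestMonoid), act g⁻¹ (act g E) = E := by
    intro g E
    rw [← h2, inv_mul_cancel, h1]
  have ne_one : ∀ (g : G) {E : ForestMonoid}, E ≠ 1 → act g E ≠ 1 := by
    intro g E hE h
    apply hE
    rw [← cancel g E, h, h7]
  intro g k
  obtain ⟨w, hw⟩ := Con.mk'_surjective (act g (lam k))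
  match hlist : FreeMonoid.toList w with
  | [] =>
      exfalso
      have hw1 : w = 1 := by
        cases w using FreeMonoid.casesOn
        · rfl
        · simp at hlist
      have : act g (lam k) = 1 := by rw [← hw, hw1]; simp
      exact ne_one g (fun h => by simpa [Lhom_lam] using congrArg Lhom h) this
  | [a] =>
      refine ⟨a, ?_⟩
      have hw1 : w = FreeMonoid.of a := by
        conv_rhs => rw [show FreeMonoid.of a = FreeMonoid.ofList [a] from rfl, ← hlist]
        exact (FreeMonoid.ofList_toList w).symm
      rw [← hw, hw1]; rfl
  | a :: b :: t =>
      exfalso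
      have hw1 : w = FreeMonoid.of a * FreeMonoid.ofList (b :: t) := by
        conv_rhs => rw [show FreeMonoid.of a * FreeMonoid.ofList (b :: t) =
          FreeMonoid.ofList (a :: b :: t) from rfl, ← hlist]
        exact (FreeMonoid.ofList_toList w).symm
      have hsplit : act g (lam k) = lam a * ForestCon.mk' (FreeMonoid.ofList (b :: t)) := by
        rw [← hw, hw1, map_mul]; rfl
      set B := ForestCon.mk' (FreeMonoid.ofList (b :: t)) with hB
      have hBne : B ≠ 1 := by
        intro h
        have := congrArg Lhom h
        rw [hB, Lhom_mk] at this
        simpa using congrArg Multiplicative.toAdd this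
      have hlamne : lam a ≠ (1 : ForestMonoid) := by
        intro h
        simpa [Lhom_lam] using congrArg Lhom h
      have : lam k = act g⁻¹ (lam a) * act (pw g⁻¹ (lam a)) B := by
        rw [← cancel g (lam k), hsplit, h8]
      exact lam_ne_mul (ne_one g⁻¹ hlamne) (ne_one _ hBne) this
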